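/- Let a, b, c, d > 0, θ := √((a+c+bd)² − 4abd), x₀ := (a+c+bd−θ)/(2b) and y₀ := (a+c−bd+θ)/(2d). Then the Jacobian matrix of the system (NOPO) at (x₀, y₀), namely J = [[−b−y₀, −x₀], [y₀, x₀−d]], satisfies det J = b(d−x₀) + d·y₀ > 0 and trace J = −b − y₀ − (d − x₀) < 0; consequently every complex eigenvalue of J has negative real part. -/
import Mathlib


/-- The Jacobian matrix of the system `ẋ = a − bx − xy`, `ẏ = c − dy + xy` at its
unique positive equilibrium `(x₀, y₀)` has positive determinant `b(d−x₀) + d·y₀` and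
negative trace `−b − y₀ − (d − x₀)`; consequently all its complex eigenvalues have
negative real part. -/
theorem stmt_2 (a b c d : ℝ) (ha : 0 < a) (hb : 0 < b) (hc : 0 < c) (hd : 0 < d) :
    let θ := Real.sqrt ((a + c + b * d) ^ 2 - 4 * a * b * d)
    let x₀ := (a + c + b * d - θ) / (2 * b)
    let y₀ := (a + c - b * d + θ) / (2 * d)
    let J : Matrix (Fin 2) (Fin 2) ℝ := !![-b - y₀, -x₀; y₀, x₀ - d]
    J.det = b * (d - x₀) + d * y₀ ∧ 0 < J.det ∧
    J.trace = -b - y₀ - (d - x₀) ∧ J.trace < 0 ∧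
    ∀ μ ∈ spectrum ℂ (J.map Complex.ofReal), μ.re < 0 := by
  intro θ x₀ y₀ J
  have hbd : 0 < b * d := mul_pos hb hd
  have habd : 0 < a * b * d := by positivity
  have hbcd : 0 < b * c * d := by positivity
  have hs : 0 ≤ (a + c + b * d) ^ 2 - 4 * a * b * d := by
    nlinarith [sq_nonneg (a - c - b * d), mul_pos ha hc]
  have hθ0 : 0 ≤ θ := Real.sqrt_nonneg _
  have hθsq : θ ^ 2 = (a + c + b * d) ^ 2 - 4 * a * b * d := Real.sq_sqrt hs
  have hθlt : θ < a + c + b * d := by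
    by_contra h
    push_neg at h
    nlinarith [mul_nonneg (sub_nonneg.mpr h) (by linarith : (0:ℝ) ≤ θ + (a + c + b * d))]
  have hθgt : b * d - (a + c) < θ := by nlinarith
  have hx : 0 < x₀ := div_pos (by linarith) (by linarith)
  have hy : 0 < y₀ := div_pos (by linarith) (by linarith)
  have hkey : y₀ * (d - x₀) = c := by
    show (a + c - b * d + θ) / (2 * d) * (d - (a + c + b * d - θ) / (2 * b)) = c
    field_simp
    nlinarith [hθsq]
  have hdx : 0 < d - x₀ := by nlinarith
  have hdet : J.det = b * (d - x₀) + d * y₀ := by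
    show Matrix.det !![-b - y₀, -x₀; y₀, x₀ - d] = _
    rw [Matrix.det_fin_two_of]; ring
  have hdetpos : 0 < J.det := by rw [hdet]; nlinarith [mul_pos hb hdx, mul_pos hd hy]
  have htr : J.trace = -b - y₀ - (d - x₀) := by
    show Matrix.trace !![-b - y₀, -x₀; y₀, x₀ - d] = _
    rw [Matrix.trace_fin_two_of]; ring
  have htrneg : J.trace < 0 := by rw [htr]; linarith
  refine ⟨hdet, hdetpos, htr, htrneg, ?_⟩
  intro μ hμ
  set M : Matrix (Fin 2) (Fin 2) ℂ := J.map Complex.ofReal with hM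
  rw [spectrum.mem_iff] at hμ
  have hdet0 : (algebraMap ℂ (Matrix (Fin 2) (Fin 2) ℂ) μ - M).det = 0 := by
    by_contra h
    exact hμ ((Matrix.isUnit_iff_isUnit_det _).mpr (isUnit_iff_ne_zero.mpr h))
  have hMe : ∀ i j, M i j = ((!![-b - y₀, -x₀; y₀, x₀ - d] i j : ℝ) : ℂ) := by
    intro i j; rfl
  rw [Matrix.det_fin_two] at hdet0
  simp only [Matrix.sub_apply, Matrix.algebraMap_matrix_apply, hMe] at hdet0
  norm_num [Matrix.cons_val_zero, Matrix.cons_val_one] at hdet0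
  -- hdet0 : (μ - (-b - y₀)) * (μ - (x₀ - d)) - (-x₀) * y₀ = 0  (roughly)
  have hchar : μ ^ 2 - ((-b - y₀ - (d - x₀) : ℝ) : ℂ) * μ
      + ((b * (d - x₀) + d * y₀ : ℝ) : ℂ) = 0 := by
    push_cast
    linear_combination hdet0
  have h1 : μ.re ^ 2 - μ.im ^ 2 - (-b - y₀ - (d - x₀)) * μ.re + (b * (d - x₀) + d * y₀) = 0 := by
    have := congrArg Complex.re hchar
    simpa [Complex.add_re, Complex.sub_re, Complex.mul_re, pow_two] using this
  have h2 : 2 * μ.re * μ.im - (-b - y₀ - (d - x₀)) * μ.im = 0 := by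
    have := congrArg Complex.im hchar
    simp [Complex.add_im, Complex.sub_im, Complex.mul_im, pow_two] at this
    linarith
  rcases eq_or_ne μ.im 0 with h0 | h0
  · rw [h0] at h1
    nlinarith [mul_pos hb hdx, mul_pos hd hy]
  · have h3 : μ.im * (2 * μ.re - (-b - y₀ - (d - x₀))) = 0 := by linear_combination h2
    rcases mul_eq_zero.mp h3 with h | h
    · exact absurd h h0
    · linarith
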